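/- arXiv:math/0409114 — 2 statements merged into one kernel-verified Lean document; each statement's English description precedes it below -/
import Mathlib

section
/- Let I be a saturated strongly stable monomial ideal of R = K[x_1,…,x_n] (n ≥ 2) with Krull dimension of R/I equal to 1. Then the maximal degree of a minimal generator of I equals min{t : x_{n−1}^t ∈ I}; in particular every minimal generator of I has degree at most this value, and x_{n−1}^{min{t : x_{n−1}^t ∈ I}} is itself a minimal generator. -/
open MvPolynomial

namespace Paper

variable {K : Type*} [Field K] {n : ℕ}

/-- `I` is a monomial ideal: together with any polynomial it contains all its monomials. -/
def IsMonomialIdeal (I : Ideal (MvPolynomial (Fin n) K)) : Prop :=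
  ∀ f ∈ I, ∀ k ∈ f.support, (monomial k (1 : K)) ∈ I

/-- `I` is a strongly stable (Borel fixed) monomial ideal. -/
def StronglyStable (I : Ideal (MvPolynomial (Fin n) K)) : Prop :=
  IsMonomialIdeal I ∧
    ∀ k : Fin n →₀ ℕ, (monomial k (1 : K)) ∈ I →
      ∀ i j : Fin n, j < i → k i ≠ 0 →
        (monomial (k + Finsupp.single j 1 - Finsupp.single i 1) (1 : K)) ∈ I

/-- The monomial with exponent vector `k` is a minimal generator of the monomial ideal `I`. -/
def IsMinGen (I : Ideal (MvPolynomial (Fin n) K)) (k : Fin n →₀ ℕ) : Prop :=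
  (monomial k (1 : K)) ∈ I ∧
    ∀ i : Fin n, k i ≠ 0 → (monomial (k - Finsupp.single i 1) (1 : K)) ∉ I

/-- The total degree of an exponent vector. -/
def expDeg (k : Fin n →₀ ℕ) : ℕ := k.sum fun _ e => e

/-- The smallest (1-based) index of a variable occurring in the monomial `x^k`. -/
noncomputable def minIdx (k : Fin n →₀ ℕ) : ℕ :=
  sInf {v : ℕ | ∃ i : Fin n, k i ≠ 0 ∧ v = (i : ℕ) + 1}

/-- The largest (1-based) index of a variable occurring in the monomial `x^k`. -/
noncomputable def maxIdx (k : Fin n →₀ ℕ) : ℕ :=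
  sSup {v : ℕ | ∃ i : Fin n, k i ≠ 0 ∧ v = (i : ℕ) + 1}

/-- `D(I)`: the maximum of `min(m)` over minimal generators `m` of `I`. -/
noncomputable def DD (I : Ideal (MvPolynomial (Fin n) K)) : ℕ :=
  sSup {v : ℕ | ∃ k : Fin n →₀ ℕ, IsMinGen I k ∧ v = minIdx k}

/-- `M(I)`: the maximum of `max(m)` over minimal generators `m` of `I`. -/
noncomputable def MM (I : Ideal (MvPolynomial (Fin n) K)) : ℕ :=
  sSup {v : ℕ | ∃ k : Fin n →₀ ℕ, IsMinGen I k ∧ v = maxIdx k}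

/-- The Hilbert function of `R/I` in (integer) degree `t`:
the `K`-dimension of the degree-`t` graded piece of `R/I`. -/
noncomputable def HF (I : Ideal (MvPolynomial (Fin n) K)) (t : ℤ) : ℕ :=
  if 0 ≤ t then
    Module.finrank K (homogeneousSubmodule (Fin n) K t.toNat) -
      Module.finrank K
        ((homogeneousSubmodule (Fin n) K t.toNat ⊓ Submodule.restrictScalars K I :
          Submodule K (MvPolynomial (Fin n) K)))
  else 0

/-- The first difference `ΔH(R/I,t) = H(R/I,t) - H(R/I,t-1)` of the Hilbert function. -/
noncomputable def dH (I : Ideal (MvPolynomial (Fin n) K)) (t : ℤ) : ℤ :=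
  (HF I t : ℤ) - HF I (t - 1)

/-- The second difference of the Hilbert function. -/
noncomputable def d2H (I : Ideal (MvPolynomial (Fin n) K)) (t : ℤ) : ℤ :=
  dH I t - dH I (t - 1)

/-- The irrelevant maximal ideal `(x_1, …, x_n)`. -/
noncomputable def irrel (n : ℕ) (K : Type*) [Field K] : Ideal (MvPolynomial (Fin n) K) :=
  Ideal.span (Set.range X)

/-- `I` is saturated: `(I : (x_1,…,x_n)) = I`. -/
def IsSaturatedIdeal (I : Ideal (MvPolynomial (Fin n) K)) : Prop :=
  Submodule.colon I (irrel n K) = I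

/-- The saturation `I^sat = ⋃ₖ (I : (x_1,…,x_n)^k)`. -/
noncomputable def saturation (I : Ideal (MvPolynomial (Fin n) K)) :
    Ideal (MvPolynomial (Fin n) K) :=
  ⨆ k : ℕ, Submodule.colon I (((irrel n K) ^ k : Ideal (MvPolynomial (Fin n) K)) : Set (MvPolynomial (Fin n) K))

/-- `I` is a homogeneous ideal: it contains all homogeneous components of its elements. -/
def IsHomogeneousIdeal (I : Ideal (MvPolynomial (Fin n) K)) : Prop :=
  ∀ f ∈ I, ∀ i : ℕ, homogeneousComponent i f ∈ I

/-- `⟨I_{≤ d}⟩`: the ideal generated by the homogeneous elements of `I` of degree at most `d`. -/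
noncomputable def idealLE (I : Ideal (MvPolynomial (Fin n) K)) (d : ℕ) : Ideal (MvPolynomial (Fin n) K) :=
  Ideal.span {f | f ∈ I ∧ ∃ e : ℕ, e ≤ d ∧ f.IsHomogeneous e}

/-- The initial degree of `I`: the least `t` with `I_t ≠ 0`. -/
noncomputable def initDeg (I : Ideal (MvPolynomial (Fin n) K)) : ℕ :=
  sInf {t : ℕ | ∃ f ∈ I, f ≠ 0 ∧ f.IsHomogeneous t}

/-- First difference operator for integer-indexed functions. -/
def diffFun (f : ℤ → ℤ) : ℤ → ℤ := fun t => f t - f (t - 1)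

/-- The depth of `R/I` with respect to the irrelevant maximal ideal: the maximal length of an
`R/I`-regular sequence of homogeneous elements of positive degree. -/
noncomputable def homDepth (I : Ideal (MvPolynomial (Fin n) K)) : ℕ :=
  sSup {k : ℕ | ∃ rs : List (MvPolynomial (Fin n) K), rs.length = k ∧
    (∀ r ∈ rs, ∃ e : ℕ, 0 < e ∧ r.IsHomogeneous e) ∧
    RingTheory.Sequence.IsRegular (MvPolynomial (Fin n) K ⧸ I) rs}

/-- The affine cone over a set of points of projective space `ℙ^{n-1}`. -/
def cone (Z : Set (Projectivization K (Fin n → K))) : Set (Fin n → K) :=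
  {v | v = 0 ∨ ∃ hv : v ≠ 0, Projectivization.mk K v hv ∈ Z}

/-- The homogeneous vanishing ideal of a set of points of projective space:
all polynomials vanishing on the affine cone. -/
def vIdeal (Z : Set (Projectivization K (Fin n → K))) : Ideal (MvPolynomial (Fin n) K) where
  carrier := {f | ∀ v ∈ cone Z, eval v f = 0}
  add_mem' := by
    intro a b ha hb v hv
    simp [map_add, ha v hv, hb v hv]
  zero_mem' := by
    intro v hv
    simp
  smul_mem' := by
    intro c f hf v hv
    simp [smul_eq_mul, hf v hv]

/-- The Uniform Position Property: any two subsets of the same cardinality have the same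
Hilbert function. -/
def UPP (Z : Finset (Projectivization K (Fin n → K))) : Prop :=
  ∀ A B : Finset (Projectivization K (Fin n → K)), A ⊆ Z → B ⊆ Z → A.card = B.card →
    ∀ t : ℤ, HF (vIdeal (A : Set (Projectivization K (Fin n → K)))) t =
      HF (vIdeal (B : Set (Projectivization K (Fin n → K)))) t

/-- `g₂(I,t)`: the minimum over pairs of linear forms `(L₁,L₂)` of
`dim_K (R/(I + (L₁,L₂)))_t` (the value attained by a generic pair). -/
noncomputable def g2 (I : Ideal (MvPolynomial (Fin n) K)) (t : ℤ) : ℕ :=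
  sInf {v : ℕ | ∃ L₁ L₂ : MvPolynomial (Fin n) K, L₁.IsHomogeneous 1 ∧ L₂.IsHomogeneous 1 ∧
    v = HF (I ⊔ Ideal.span {L₁, L₂}) t}

/-- The Artinian reduction of `R/I` has the Weak Lefschetz Property. -/
def WLP (I : Ideal (MvPolynomial (Fin n) K)) : Prop :=
  ∃ L₁ L₂ : MvPolynomial (Fin n) K, L₁.IsHomogeneous 1 ∧ L₂.IsHomogeneous 1 ∧
    (∀ g, L₁ * g ∈ I → g ∈ I) ∧
    ∀ t : ℕ,
      (∀ f : MvPolynomial (Fin n) K, f.IsHomogeneous t →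
        L₂ * f ∈ I ⊔ Ideal.span {L₁} → f ∈ I ⊔ Ideal.span {L₁}) ∨
      (∀ g : MvPolynomial (Fin n) K, g.IsHomogeneous (t + 1) →
        ∃ f : MvPolynomial (Fin n) K, f.IsHomogeneous t ∧ g - L₂ * f ∈ I ⊔ Ideal.span {L₁})

lemma expDeg_eq_sum (k : Fin n →₀ ℕ) : expDeg k = ∑ i, k i :=
  Finsupp.sum_fintype _ _ (fun _ => rfl)

lemma expDeg_add (a b : Fin n →₀ ℕ) : expDeg (a + b) = expDeg a + expDeg b := by
  simp [expDeg_eq_sum, Finset.sum_add_distrib]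

lemma expDeg_single (i : Fin n) (e : ℕ) : expDeg (Finsupp.single i e) = e := by
  simp [expDeg]

/-- move one unit of exponent from `i` to `j` (as an identity of exponent vectors). -/

lemma monomial_mul_X (v : Fin n →₀ ℕ) (i : Fin n) :
    (monomial v (1 : K)) * X i = monomial (v + Finsupp.single i 1) 1 := by
  rw [← pow_one (X i : MvPolynomial (Fin n) K), X_pow_eq_monomial, monomial_mul, mul_one]

lemma move_key (v : Fin n →₀ ℕ) (i j : Fin n) (hij : i ≠ j) (hvi : v i ≠ 0) :
    (v + Finsupp.single j 1 - Finsupp.single i 1) + Finsupp.single i 1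
      = v + Finsupp.single j 1 := by
  have hvi' : 1 ≤ v i := Nat.one_le_iff_ne_zero.mpr hvi
  ext c
  simp only [Finsupp.add_apply, Finsupp.tsub_apply]
  by_cases hci : c = i
  · subst hci
    rw [Finsupp.single_eq_same, Finsupp.single_eq_of_ne' hij.symm]
    omega
  · rw [Finsupp.single_eq_of_ne' (Ne.symm hci)]
    omega

/-- From `x_j^e ∈ I`, all monomials of degree `e` supported on indices `≤ j` are in `I`. -/

lemma borel_down (I : Ideal (MvPolynomial (Fin n) K)) (hSS : StronglyStable I) (j : Fin n) :
    ∀ m (v : Fin n →₀ ℕ), (∑ c, if c = j then 0 else v c) = m →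
    (∀ c, v c ≠ 0 → c ≤ j) →
    monomial (Finsupp.single j (expDeg v)) (1 : K) ∈ I → monomial v (1 : K) ∈ I := by
  intro m
  induction m with
  | zero =>
    intro v hm hsupp hmem
    have hz : ∀ c, c ≠ j → v c = 0 := by
      intro c hc
      by_contra hvc
      have h1 : (if c = j then 0 else v c) = 0 :=
        Finset.sum_eq_zero_iff.mp hm c (Finset.mem_univ c)
      rw [if_neg hc] at h1
      exact hvc h1
    have hv : v = Finsupp.single j (v j) := by
      ext c
      by_cases hc : c = j
      · subst hc; simp
      · rw [hz c hc, Finsupp.single_apply, if_neg (fun h : j = c => hc h.symm)]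
    have hdeg : expDeg v = v j := by
      conv_lhs => rw [hv]
      rw [expDeg_single]
    rw [hv, ← hdeg]
    exact hmem
  | succ m ih =>
    intro v hm hsupp hmem
    -- there is i ≠ j with v i ≠ 0
    have hex : ∃ i, i ≠ j ∧ v i ≠ 0 := by
      by_contra hno
      push_neg at hno
      have : (∑ c, if c = j then 0 else v c) = 0 := by
        apply Finset.sum_eq_zero
        intro c _
        by_cases hc : c = j
        · rw [if_pos hc]
        · rw [if_neg hc]; exact hno c hc
      omega
    obtain ⟨i, hij, hvi⟩ := hex
    have hil : i < j := lt_of_le_of_ne (hsupp i hvi) hij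
    set v' := v + Finsupp.single j 1 - Finsupp.single i 1 with hv'
    have hkey : v' + Finsupp.single i 1 = v + Finsupp.single j 1 :=
      move_key v i j hij hvi
    have happ : ∀ c, v' c + (Finsupp.single i 1 : Fin n →₀ ℕ) c
        = v c + (Finsupp.single j 1 : Fin n →₀ ℕ) c := by
      intro c
      have := DFunLike.congr_fun hkey c
      simpa [Finsupp.add_apply] using this
    have hv'i : v' i = v i - 1 := by
      have := happ i
      rw [Finsupp.single_apply, if_pos rfl,
        Finsupp.single_apply, if_neg (fun h : j = i => hij h.symm)] at this
      omega
    have hv'j : v' j = v j + 1 := by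
      have := happ j
      rw [Finsupp.single_apply, if_neg hij, Finsupp.single_apply, if_pos rfl] at this
      omega
    have hv'c : ∀ c, c ≠ i → c ≠ j → v' c = v c := by
      intro c hci hcj
      have := happ c
      rw [Finsupp.single_apply, if_neg (fun h : i = c => hci h.symm),
        Finsupp.single_apply, if_neg (fun h : j = c => hcj h.symm)] at this
      omega
    have hdeg' : expDeg v' = expDeg v := by
      have h1 := congrArg expDeg hkey
      rw [expDeg_add, expDeg_add, expDeg_single, expDeg_single] at h1
      omega
    have hm' : (∑ c, if c = j then 0 else v' c) = m := by
      have heq : ∑ c ∈ Finset.univ.erase i, (if c = j then 0 else v' c)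
          = ∑ c ∈ Finset.univ.erase i, (if c = j then 0 else v c) := by
        apply Finset.sum_congr rfl
        intro c hc
        by_cases hcj : c = j
        · rw [if_pos hcj, if_pos hcj]
        · rw [if_neg hcj, if_neg hcj, hv'c c (Finset.ne_of_mem_erase hc) hcj]
      have e1 : (∑ c, if c = j then 0 else v c)
          = (if i = j then 0 else v i) + ∑ c ∈ Finset.univ.erase i,
              (if c = j then 0 else v c) :=
        (Finset.add_sum_erase _ _ (Finset.mem_univ i)).symm
      have e2 : (∑ c, if c = j then 0 else v' c)
          = (if i = j then 0 else v' i) + ∑ c ∈ Finset.univ.erase i,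
              (if c = j then 0 else v' c) :=
        (Finset.add_sum_erase _ _ (Finset.mem_univ i)).symm
      rw [e2, heq, if_neg hij, hv'i]
      rw [e1, if_neg hij] at hm
      have : 1 ≤ v i := Nat.one_le_iff_ne_zero.mpr hvi
      omega
    have hsupp' : ∀ c, v' c ≠ 0 → c ≤ j := by
      intro c hc
      by_cases hci : c = i
      · subst hci; exact le_of_lt hil
      by_cases hcj : c = j
      · subst hcj; exact le_refl _
      · rw [hv'c c hci hcj] at hc
        exact hsupp c hc
    have hmemv' : monomial v' (1 : K) ∈ I := by
      apply ih v' hm' hsupp'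
      rw [hdeg']
      exact hmem
    have hmove := hSS.2 v' hmemv' j i hil (by rw [hv'j]; omega)
    have hfin : v' + Finsupp.single i 1 - Finsupp.single j 1 = v := by
      rw [hkey]
      ext c
      simp only [Finsupp.add_apply, Finsupp.tsub_apply]
      omega
    rwa [hfin] at hmove

/-- From a monomial in `I` supported on `{p, l}` (p < l), collect everything onto `p`. -/

lemma borel_collect (I : Ideal (MvPolynomial (Fin n) K)) (hSS : StronglyStable I)
    (p l : Fin n) (hpl : p < l) :
    ∀ m (v : Fin n →₀ ℕ), v l = m → (∀ c, v c ≠ 0 → c = p ∨ c = l) →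
    monomial v (1 : K) ∈ I →
    monomial (Finsupp.single p (expDeg v)) (1 : K) ∈ I := by
  intro m
  induction m with
  | zero =>
    intro v hvl hsupp hmem
    have hv : v = Finsupp.single p (v p) := by
      ext c
      by_cases hc : c = p
      · subst hc; simp
      · have hvc : v c = 0 := by
          by_contra h
          rcases hsupp c h with h1 | h1
          · exact hc h1
          · subst h1; exact h hvl
        rw [hvc, Finsupp.single_apply, if_neg (fun h : p = c => hc h.symm)]
    have hdeg : expDeg v = v p := by
      conv_lhs => rw [hv]
      rw [expDeg_single]
    rw [hdeg, ← hv]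
    exact hmem
  | succ m ih =>
    intro v hvl hsupp hmem
    have hvl0 : v l ≠ 0 := by omega
    set v' := v + Finsupp.single p 1 - Finsupp.single l 1 with hv'
    have hkey : v' + Finsupp.single l 1 = v + Finsupp.single p 1 :=
      move_key v l p (ne_of_gt hpl) hvl0
    have happ : ∀ c, v' c + (Finsupp.single l 1 : Fin n →₀ ℕ) c
        = v c + (Finsupp.single p 1 : Fin n →₀ ℕ) c := by
      intro c
      have := DFunLike.congr_fun hkey c
      simpa [Finsupp.add_apply] using this
    have hlp : l ≠ p := ne_of_gt hpl
    have hv'l : v' l = v l - 1 := by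
      have := happ l
      rw [Finsupp.single_apply, if_pos rfl, Finsupp.single_apply, if_neg (fun h : p = l => hlp h.symm)] at this
      omega
    have hv'p : v' p = v p + 1 := by
      have := happ p
      rw [Finsupp.single_apply, if_neg hlp, Finsupp.single_apply, if_pos rfl] at this
      omega
    have hv'c : ∀ c, c ≠ l → c ≠ p → v' c = v c := by
      intro c hcl hcp
      have := happ c
      rw [Finsupp.single_apply, if_neg (fun h : l = c => hcl h.symm),
        Finsupp.single_apply, if_neg (fun h : p = c => hcp h.symm)] at this
      omega
    have hdeg' : expDeg v' = expDeg v := by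
      have h1 := congrArg expDeg hkey
      rw [expDeg_add, expDeg_add, expDeg_single, expDeg_single] at h1
      omega
    have hmemv' : monomial v' (1 : K) ∈ I := hSS.2 v hmem l p hpl hvl0
    have := ih v' (by omega) (by
      intro c hc
      by_cases hcl : c = l
      · right; exact hcl
      by_cases hcp : c = p
      · left; exact hcp
      · rw [hv'c c hcl hcp] at hc
        exact hsupp c hc) hmemv'
    rwa [hdeg'] at this

lemma minGen_last_zero (hn : 2 ≤ n) (I : Ideal (MvPolynomial (Fin n) K))
    (hSS : StronglyStable I) (hsat : IsSaturatedIdeal I)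
    (k : Fin n →₀ ℕ) (hk : IsMinGen I k) : k ⟨n - 1, by omega⟩ = 0 := by
  set l : Fin n := ⟨n - 1, by omega⟩ with hl
  by_contra hkl
  have hkl' : 1 ≤ k l := Nat.one_le_iff_ne_zero.mpr hkl
  have hmem : monomial (k - Finsupp.single l 1) (1 : K) ∈ I := by
    rw [← hsat, Submodule.mem_colon]
    intro q hq
    induction hq using Submodule.span_induction with
    | mem x hx =>
      obtain ⟨i, rfl⟩ := hx
      rw [smul_eq_mul, monomial_mul_X]
      by_cases hil : i = l
      · subst hil
        have hkey : (k - Finsupp.single l 1) + Finsupp.single l 1 = k := by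
          ext c
          simp only [Finsupp.add_apply, Finsupp.tsub_apply]
          by_cases hc : c = l
          · subst hc; simp only [Finsupp.single_eq_same]; omega
          · simp only [Finsupp.single_eq_of_ne' (Ne.symm hc)]; omega
        rw [hkey]
        exact hk.1
      · have hilt : i < l := by
          rw [Fin.lt_def]
          show (i : ℕ) < n - 1
          have h1 := i.isLt
          have h2 : (i : ℕ) ≠ n - 1 := by
            intro h
            exact hil (Fin.ext h)
          omega
        have hB := hSS.2 k hk.1 l i hilt hkl
        have hkey : (k - Finsupp.single l 1) + Finsupp.single i 1
            = k + Finsupp.single i 1 - Finsupp.single l 1 := by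
          ext c
          simp only [Finsupp.add_apply, Finsupp.tsub_apply]
          by_cases hc : c = l
          · subst hc
            rw [Finsupp.single_eq_same, Finsupp.single_eq_of_ne' (fun h => hil h)]
            omega
          · rw [Finsupp.single_eq_of_ne' (Ne.symm hc)]
            omega
        rw [hkey]
        exact hB
    | zero => rw [smul_eq_mul, mul_zero]; exact I.zero_mem
    | add x y hx hy ihx ihy =>
      rw [smul_eq_mul, mul_add]
      exact I.add_mem ihx ihy
    | smul a x hx ihx =>
      rw [smul_eq_mul, smul_eq_mul, mul_left_comm]
      exact I.mul_mem_left a ihx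
  exact hk.2 l hkl hmem

lemma minGen_deg_le (hn : 2 ≤ n) (I : Ideal (MvPolynomial (Fin n) K))
    (hSS : StronglyStable I) (hsat : IsSaturatedIdeal I) (s : ℕ)
    (hs : (X (⟨n - 2, (by omega : n - 2 < n + 0)⟩ : Fin n) : MvPolynomial (Fin n) K) ^ s ∈ I)
    (k : Fin n →₀ ℕ) (hk : IsMinGen I k) : expDeg k ≤ s := by
  set p : Fin n := ⟨n - 2, by omega⟩ with hp
  by_contra hgt
  push_neg at hgt
  have hk0 : ∃ i, k i ≠ 0 := by
    by_contra h
    push_neg at h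
    have hkz : k = 0 := Finsupp.ext fun c => h c
    rw [hkz] at hgt
    have : expDeg (0 : Fin n →₀ ℕ) = 0 := by simp [expDeg]
    omega
  obtain ⟨i, hi⟩ := hk0
  have hi' : 1 ≤ k i := Nat.one_le_iff_ne_zero.mpr hi
  have hlast := minGen_last_zero hn I hSS hsat k hk
  have hsupp : ∀ c, k c ≠ 0 → c ≤ p := by
    intro c hc
    have h1 : (c : ℕ) ≠ n - 1 := by
      intro h
      apply hc
      have : c = (⟨n - 1, by omega⟩ : Fin n) := Fin.ext h
      rw [this]
      exact hlast
    have h2 := c.isLt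
    rw [hp, Fin.le_def]
    show (c : ℕ) ≤ n - 2
    omega
  set v := k - Finsupp.single i 1 with hv
  have hkv : v + Finsupp.single i 1 = k := by
    rw [hv]
    ext c
    simp only [Finsupp.add_apply, Finsupp.tsub_apply]
    by_cases hc : c = i
    · subst hc; simp only [Finsupp.single_eq_same]; omega
    · simp only [Finsupp.single_eq_of_ne' (Ne.symm hc)]; omega
  have hdeg : expDeg v + 1 = expDeg k := by
    conv_rhs => rw [← hkv]
    rw [expDeg_add, expDeg_single]
  have hvsupp : ∀ c, v c ≠ 0 → c ≤ p := by
    intro c hc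
    apply hsupp
    intro hkc
    apply hc
    rw [hv, Finsupp.tsub_apply, hkc]
    simp
  have hXmem : monomial (Finsupp.single p (expDeg v)) (1 : K) ∈ I := by
    rw [← X_pow_eq_monomial]
    have he : expDeg v = s + (expDeg v - s) := by omega
    rw [he, pow_add]
    exact Ideal.mul_mem_right _ _ hs
  exact hk.2 i hi (borel_down I hSS p _ v rfl hvsupp hXmem)

lemma not_one_mem_of_dim (I : Ideal (MvPolynomial (Fin n) K))
    (hdim : ringKrullDim (MvPolynomial (Fin n) K ⧸ I) = 1) :
    (1 : MvPolynomial (Fin n) K) ∉ I := by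
  intro h1
  have hT : I = ⊤ := (Ideal.eq_top_iff_one I).mpr h1
  have hsub : Subsingleton (MvPolynomial (Fin n) K ⧸ I) :=
    Ideal.Quotient.subsingleton_iff.mpr hT
  rw [ringKrullDim_eq_bot_of_subsingleton] at hdim
  simp at hdim

/-- kernels of the "kill the first a variables" maps are nested. -/

lemma ker_aeval_ite_mono (a b : ℕ) (hab : a ≤ b) (f : MvPolynomial (Fin n) K)
    (hf : aeval (fun i : Fin n => if (i : ℕ) < a then (0 : MvPolynomial (Fin n) K) else X i) f = 0) :
    aeval (fun i : Fin n => if (i : ℕ) < b then (0 : MvPolynomial (Fin n) K) else X i) f = 0 := by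
  have hcomp : (aeval (fun i : Fin n => if (i : ℕ) < b then (0 : MvPolynomial (Fin n) K) else X i) :
        MvPolynomial (Fin n) K →ₐ[K] MvPolynomial (Fin n) K)
      = (aeval (fun i : Fin n => if (i : ℕ) < b then (0 : MvPolynomial (Fin n) K) else X i)).comp
          (aeval (fun i : Fin n => if (i : ℕ) < a then (0 : MvPolynomial (Fin n) K) else X i)) := by
    apply MvPolynomial.algHom_ext
    intro i
    rw [AlgHom.comp_apply, aeval_X, aeval_X]
    by_cases h2 : (i : ℕ) < a
    · rw [if_pos h2, if_pos (show (i : ℕ) < b by omega), map_zero]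
    · rw [if_neg h2, aeval_X]
  rw [hcomp, AlgHom.comp_apply, hf, map_zero]

lemma exists_pow_mem (hn : 2 ≤ n) (I : Ideal (MvPolynomial (Fin n) K))
    (hSS : StronglyStable I)
    (hdim : ringKrullDim (MvPolynomial (Fin n) K ⧸ I) = 1) :
    ∃ t : ℕ, (X (⟨n - 2, (by omega : n - 2 < n + 0)⟩ : Fin n) : MvPolynomial (Fin n) K) ^ t ∈ I := by
  by_contra hno
  push_neg at hno
  set p : Fin n := ⟨n - 2, by omega⟩ with hp
  set l : Fin n := ⟨n - 1, by omega⟩ with hl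
  have hpl : p < l := by
    rw [Fin.lt_def]
    show n - 2 < n - 1
    omega
  have h1 : (1 : MvPolynomial (Fin n) K) ∉ I := by
    have := hno 0
    rwa [pow_zero] at this
  -- the three evaluation maps and their kernels
  let G : ℕ → (Fin n → MvPolynomial (Fin n) K) :=
    fun a i => if (i : ℕ) < a then 0 else X i
  let P : ℕ → Ideal (MvPolynomial (Fin n) K) :=
    fun a => RingHom.ker (aeval (G a) : MvPolynomial (Fin n) K →ₐ[K] MvPolynomial (Fin n) K)
  have hPprime : ∀ a, (P a).IsPrime := fun a => RingHom.ker_isPrime _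
  have hPmono : ∀ a b, a ≤ b → P a ≤ P b := by
    intro a b hab f hf
    rw [RingHom.mem_ker] at hf ⊢
    exact ker_aeval_ite_mono a b hab f hf
  -- I is contained in P (n-2)
  have hIP : I ≤ P (n - 2) := by
    intro f hf
    rw [RingHom.mem_ker]
    have hf' : f = ∑ v ∈ f.support, monomial v (coeff v f) :=
      (support_sum_monomial_coeff f).symm
    rw [hf', map_sum]
    apply Finset.sum_eq_zero
    intro v hv
    have hmono := hSS.1 f hf v hv
    have hexists : ∃ i : Fin n, (i : ℕ) < n - 2 ∧ v i ≠ 0 := by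
      by_contra hni
      push_neg at hni
      have hsupp : ∀ c, v c ≠ 0 → c = p ∨ c = l := by
        intro c hc
        have h2 := c.isLt
        by_cases hcv : (c : ℕ) = n - 2
        · left; exact Fin.ext hcv
        · right
          apply Fin.ext
          show (c : ℕ) = n - 1
          by_contra hcv2
          have hlt : (c : ℕ) < n - 2 := by omega
          exact hc (hni c hlt)
      have hcol := borel_collect I hSS p l hpl (v l) v rfl hsupp hmono
      rw [← X_pow_eq_monomial] at hcol
      exact hno _ hcol
    obtain ⟨i, hilt, hvi⟩ := hexists
    rw [aeval_monomial]
    have hprod : (Finsupp.prod v fun i k => G (n - 2) i ^ k) = 0 := by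
      rw [Finsupp.prod]
      apply Finset.prod_eq_zero (Finsupp.mem_support_iff.mpr hvi)
      have hGi : G (n - 2) i = 0 := if_pos hilt
      rw [hGi]
      exact zero_pow hvi
    rw [hprod, mul_zero]
  -- non-membership witnesses
  have hXpP : X p ∉ P (n - 2) := by
    intro h
    rw [RingHom.mem_ker, aeval_X] at h
    have : G (n - 2) p = X p := if_neg (by show ¬ (n - 2 < n - 2); omega)
    rw [this] at h
    exact X_ne_zero p h
  have hXpP1 : X p ∈ P (n - 1) := by
    rw [RingHom.mem_ker, aeval_X]
    exact if_pos (by show n - 2 < n - 1; omega)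
  have hXlP1 : X l ∉ P (n - 1) := by
    intro h
    rw [RingHom.mem_ker, aeval_X] at h
    have : G (n - 1) l = X l := if_neg (by show ¬ (n - 1 < n - 1); omega)
    rw [this] at h
    exact X_ne_zero l h
  have hXlPn : X l ∈ P n := by
    rw [RingHom.mem_ker, aeval_X]
    exact if_pos l.isLt
  -- push the chain to the quotient
  let π : MvPolynomial (Fin n) K →+* MvPolynomial (Fin n) K ⧸ I := Ideal.Quotient.mk I
  have hsurj : Function.Surjective π := Ideal.Quotient.mk_surjective
  have hker : RingHom.ker π = I := Ideal.mk_ker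
  have hIPa : ∀ a, n - 2 ≤ a → I ≤ P a := fun a ha => le_trans hIP (hPmono _ _ ha)
  have hqprime : ∀ a, n - 2 ≤ a → ((P a).map π).IsPrime := by
    intro a ha
    haveI := hPprime a
    exact Ideal.map_isPrime_of_surjective hsurj (by rw [hker]; exact hIPa a ha)
  have hmaplt : ∀ a b, n - 2 ≤ a → a ≤ b → (x : MvPolynomial (Fin n) K) → x ∈ P b → x ∉ P a →
      (P a).map π < (P b).map π := by
    intro a b ha hab x hxb hxa
    refine lt_of_le_of_ne (Ideal.map_mono (hPmono a b hab)) ?_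
    intro h
    have hc := congrArg (Ideal.comap π) h
    rw [Ideal.comap_map_of_surjective π hsurj, Ideal.comap_map_of_surjective π hsurj] at hc
    have hcb : Ideal.comap π ⊥ = I := by rw [← RingHom.ker_eq_comap_bot, hker]
    rw [hcb, sup_eq_left.mpr (hIPa a ha), sup_eq_left.mpr (hIPa b (le_trans ha hab))] at hc
    rw [← hc] at hxb
    exact hxa hxb
  have hlt01 : (P (n - 2)).map π < (P (n - 1)).map π :=
    hmaplt (n - 2) (n - 1) le_rfl (by omega) (X p) hXpP1 hXpP
  have hlt12 : (P (n - 1)).map π < (P n).map π :=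
    hmaplt (n - 1) n (by omega) (by omega) (X l) hXlPn hXlP1
  let q0 : PrimeSpectrum (MvPolynomial (Fin n) K ⧸ I) := ⟨(P (n - 2)).map π, hqprime _ le_rfl⟩
  let q1 : PrimeSpectrum (MvPolynomial (Fin n) K ⧸ I) := ⟨(P (n - 1)).map π, hqprime _ (by omega)⟩
  let q2 : PrimeSpectrum (MvPolynomial (Fin n) K ⧸ I) := ⟨(P n).map π, hqprime _ (by omega)⟩
  have hq01 : q0 < q1 := (PrimeSpectrum.asIdeal_lt_asIdeal q0 q1).mp hlt01
  have hq12 : q1 < q2 := (PrimeSpectrum.asIdeal_lt_asIdeal q1 q2).mp hlt12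
  let ch : LTSeries (PrimeSpectrum (MvPolynomial (Fin n) K ⧸ I)) :=
    { length := 2
      toFun := ![q0, q1, q2]
      step := by
        intro i
        fin_cases i
        · exact hq01
        · exact hq12 }
  have h2le : (2 : ℕ) ≤ ringKrullDim (MvPolynomial (Fin n) K ⧸ I) :=
    Order.LTSeries.length_le_krullDim ch
  rw [hdim] at h2le
  norm_num at h2le

theorem maxDeg_minGen_dim_one {K : Type*} [Field K] {n : ℕ} (hn : 2 ≤ n)
    (I : Ideal (MvPolynomial (Fin n) K)) (hSS : StronglyStable I)
    (hsat : IsSaturatedIdeal I)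
    (hdim : ringKrullDim (MvPolynomial (Fin n) K ⧸ I) = 1) :
    (∀ k : Fin n →₀ ℕ, IsMinGen I k →
      expDeg k ≤ sInf {t : ℕ | (X (⟨n - 2, by omega⟩ : Fin n) : MvPolynomial (Fin n) K) ^ t ∈ I}) ∧
    IsMinGen I (Finsupp.single (⟨n - 2, by omega⟩ : Fin n)
      (sInf {t : ℕ | (X (⟨n - 2, by omega⟩ : Fin n) : MvPolynomial (Fin n) K) ^ t ∈ I})) := by
  have hne : {t : ℕ | (X (⟨n - 2, by omega⟩ : Fin n) : MvPolynomial (Fin n) K) ^ t ∈ I}.Nonempty :=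
    exists_pow_mem hn I hSS hdim
  set s := sInf {t : ℕ | (X (⟨n - 2, by omega⟩ : Fin n) : MvPolynomial (Fin n) K) ^ t ∈ I} with hsdef
  have hsmem : (X (⟨n - 2, by omega⟩ : Fin n) : MvPolynomial (Fin n) K) ^ s ∈ I :=
    Nat.sInf_mem hne
  have h1 : (1 : MvPolynomial (Fin n) K) ∉ I := not_one_mem_of_dim I hdim
  have hs1 : 1 ≤ s := by
    rcases Nat.eq_zero_or_pos s with h | h
    · exfalso
      rw [h, pow_zero] at hsmem
      exact h1 hsmem
    · exact h
  refine ⟨fun k hk => minGen_deg_le hn I hSS hsat s hsmem k hk, ?_, ?_⟩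
  · rw [← X_pow_eq_monomial]
    exact hsmem
  · intro i hi
    have hip : i = (⟨n - 2, by omega⟩ : Fin n) := by
      by_contra hne'
      rw [Finsupp.single_eq_of_ne' (Ne.symm hne')] at hi
      exact hi rfl
    subst hip
    have hkey : Finsupp.single (⟨n - 2, by omega⟩ : Fin n) s
          - Finsupp.single (⟨n - 2, by omega⟩ : Fin n) 1
        = Finsupp.single (⟨n - 2, by omega⟩ : Fin n) (s - 1) := by
      ext c
      rw [Finsupp.tsub_apply]
      by_cases hc : c = (⟨n - 2, by omega⟩ : Fin n)
      · subst hc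
        simp [Finsupp.single_eq_same]
      · simp [Finsupp.single_eq_of_ne' (Ne.symm hc)]
    rw [hkey, ← X_pow_eq_monomial]
    have hnotin : s - 1 ∉
        {t : ℕ | (X (⟨n - 2, by omega⟩ : Fin n) : MvPolynomial (Fin n) K) ^ t ∈ I} :=
      Nat.notMem_of_lt_sInf (by omega)
    exact hnotin

end Paper
end

section
/- Let I be a saturated strongly stable monomial ideal of R = K[x_1,…,x_n] with Krull dimension of R/I equal to 1. Let α be the initial degree of I and let deg(R/I) be the eventual constant value of the Hilbert function H(R/I,t) for large t (which exists since dim(R/I) = 1). Then the maximal degree of a minimal generator of I (which equals the Castelnuovo–Mumford regularity reg(I) since I is Borel fixed) satisfies reg(I) ≤ deg(R/I) − C(α−1+n−1, α−1) + α, where C(a,b) denotes the binomial coefficient. -/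
open MvPolynomial

namespace Paper

variable {K : Type*} [Field K] {n : ℕ}

section Aux

variable {K : Type*} [Field K] {n : ℕ}

lemma expDeg_eq_degree (k : Fin n →₀ ℕ) : expDeg k = k.degree := rfl

lemma degree_add' (a b : Fin n →₀ ℕ) : (a + b).degree = a.degree + b.degree := by
  simp [Finsupp.degree_eq_weight_one]

lemma degree_single' (i : Fin n) (m : ℕ) : (Finsupp.single i m).degree = m := by
  simp [Finsupp.degree_eq_weight_one, Finsupp.weight_apply, Finsupp.sum_single_index]

lemma mono_mem_of_le {I : Ideal (MvPolynomial (Fin n) K)} {f e : Fin n →₀ ℕ}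
    (h : f ≤ e) (hf : (monomial f (1 : K)) ∈ I) : (monomial e (1 : K)) ∈ I := by
  have : (monomial e (1 : K)) = monomial (e - f) (1 : K) * monomial f (1:K) := by
    rw [monomial_mul, one_mul, tsub_add_cancel_of_le h]
  rw [this]
  exact Ideal.mul_mem_left _ _ hf

lemma exists_le_expDeg {e : Fin n →₀ ℕ} {m : ℕ} (h : m ≤ expDeg e) :
    ∃ f : Fin n →₀ ℕ, f ≤ e ∧ expDeg f = m := by
  obtain ⟨c, hc⟩ := Nat.exists_eq_add_of_le h
  clear h
  induction c generalizing e with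
  | zero => exact ⟨e, le_refl _, by omega⟩
  | succ c ih =>
    have hpos : 0 < expDeg e := by omega
    have hne : e ≠ 0 := by rintro rfl; simp [expDeg] at hpos
    obtain ⟨i, hi⟩ : ∃ i, e i ≠ 0 := by
      by_contra hno
      push_neg at hno
      exact hne (Finsupp.ext fun i => hno i)
    have hle : Finsupp.single i 1 ≤ e := by
      rw [Finsupp.single_le_iff]; omega
    have hdeg : expDeg (e - Finsupp.single i 1) = m + c := by
      have h2 := congrArg Finsupp.degree (tsub_add_cancel_of_le hle)
      rw [degree_add', degree_single'] at h2
      simp only [expDeg_eq_degree] at hc ⊢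
      omega
    exact (ih hdeg).imp fun f ⟨h1, h2⟩ => ⟨le_trans h1 tsub_le_self, h2⟩

lemma sat_step {I : Ideal (MvPolynomial (Fin n) K)} (hSS : StronglyStable I)
    (hsat : IsSaturatedIdeal I) (hn : 0 < n) (e : Fin n →₀ ℕ)
    (h : (monomial (e + Finsupp.single ⟨n-1, by omega⟩ 1) (1 : K)) ∈ I) :
    (monomial e (1 : K)) ∈ I := by
  set last : Fin n := ⟨n-1, by omega⟩ with hlast
  have hXj : ∀ j : Fin n, X j * monomial e (1:K) = monomial (e + Finsupp.single j 1) 1 := by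
    intro j
    rw [show (X j : MvPolynomial (Fin n) K) = monomial (Finsupp.single j 1) 1 from rfl,
      monomial_mul, one_mul, add_comm]
  have hj : ∀ j : Fin n, (monomial (e + Finsupp.single j 1) (1:K)) ∈ I := by
    intro j
    rcases eq_or_ne j last with rfl | hne
    · exact h
    · have hjlt : j < last := by
        rw [Fin.lt_def]
        have := j.2
        have : (j:ℕ) ≠ n - 1 := fun hh => hne (Fin.ext hh)
        simp only [hlast]
        omega
      have := hSS.2 (e + Finsupp.single last 1) h last j hjlt (by simp)
      have heq : e + Finsupp.single last 1 + Finsupp.single j 1 - Finsupp.single last 1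
          = e + Finsupp.single j 1 := by
        ext x
        simp only [Finsupp.coe_tsub, Finsupp.coe_add, Pi.sub_apply, Pi.add_apply]
        omega
      rwa [heq] at this
  rw [← hsat]
  rw [Submodule.mem_colon]
  intro p hp
  rw [smul_eq_mul, mul_comm]
  induction hp using Submodule.span_induction with
  | mem x hx =>
      obtain ⟨j, rfl⟩ := hx
      rw [hXj]; exact hj j
  | zero => simp
  | add a b _ _ ha hb => rw [add_mul]; exact I.add_mem ha hb
  | smul r a _ ha => rw [smul_eq_mul, mul_assoc]; exact I.mul_mem_left r ha

lemma minGen_last_eq_zero {I : Ideal (MvPolynomial (Fin n) K)} (hSS : StronglyStable I)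
    (hsat : IsSaturatedIdeal I) (hn : 0 < n) {k : Fin n →₀ ℕ} (hk : IsMinGen I k) :
    k ⟨n-1, by omega⟩ = 0 := by
  set last : Fin n := ⟨n-1, by omega⟩
  by_contra hne
  apply hk.2 last hne
  apply sat_step hSS hsat hn
  have : k - Finsupp.single last 1 + Finsupp.single last 1 = k := by
    apply tsub_add_cancel_of_le
    rw [Finsupp.single_le_iff]; omega
  rw [this]; exact hk.1

def mset (n t : ℕ) : Set (Fin n →₀ ℕ) := {d | d.degree = t}

def bset (I : Ideal (MvPolynomial (Fin n) K)) (t : ℕ) : Set (Fin n →₀ ℕ) :=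
  {d | d.degree = t ∧ (monomial d (1:K)) ∈ I}

def dset (I : Ideal (MvPolynomial (Fin n) K)) (t : ℕ) : Set (Fin n →₀ ℕ) :=
  {d | d.degree = t ∧ (monomial d (1:K)) ∉ I}

lemma mset_finite (t : ℕ) : (mset n t).Finite :=
  (Finsupp.finite_of_degree_le t).subset fun _ hd => le_of_eq hd

lemma bset_subset (I : Ideal (MvPolynomial (Fin n) K)) (t : ℕ) : bset I t ⊆ mset n t :=
  fun _ h => h.1

lemma dset_subset (I : Ideal (MvPolynomial (Fin n) K)) (t : ℕ) : dset I t ⊆ mset n t :=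
  fun _ h => h.1

lemma dset_finite (I : Ideal (MvPolynomial (Fin n) K)) (t : ℕ) : (dset I t).Finite :=
  (mset_finite t).subset (dset_subset I t)

lemma dset_eq (I : Ideal (MvPolynomial (Fin n) K)) (t : ℕ) :
    dset I t = mset n t \ bset I t := by
  ext d; simp only [dset, mset, bset, Set.mem_setOf_eq, Set.mem_diff]; tauto

lemma finrank_supported (s : Set (Fin n →₀ ℕ)) (hs : s.Finite) :
    Module.finrank K (AddMonoidAlgebra.supported K K s) = s.ncard := by
  have : Fintype s := hs.fintype
  rw [(AddMonoidAlgebra.supportedEquivFinsupp (S := K) (R := K) s).finrank_eq,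
    Module.finrank_finsupp_self, ← Nat.card_eq_fintype_card, Nat.card_coe_set_eq]

lemma homSub_eq (t : ℕ) :
    homogeneousSubmodule (Fin n) K t = AddMonoidAlgebra.supported K K (mset n t) :=
  homogeneousSubmodule_eq_finsupp_supported _ _ t

lemma inter_eq {I : Ideal (MvPolynomial (Fin n) K)} (hI : IsMonomialIdeal I) (t : ℕ) :
    (homogeneousSubmodule (Fin n) K t ⊓ Submodule.restrictScalars K I :
      Submodule K (MvPolynomial (Fin n) K)) = AddMonoidAlgebra.supported K K (bset I t) := by
  ext f
  simp only [Submodule.mem_inf, mem_homogeneousSubmodule, Submodule.restrictScalars_mem,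
    AddMonoidAlgebra.mem_supported]
  constructor
  · rintro ⟨hhom, hfI⟩ d hd
    have hd' : d ∈ f.support := hd
    refine ⟨?_, hI f hfI d hd'⟩
    have := hhom (show coeff d f ≠ 0 by simpa [mem_support_iff] using hd')
    simpa [Finsupp.degree_eq_weight_one, Pi.one_def] using this
  · intro hsupp
    constructor
    · have h1 : f ∈ AddMonoidAlgebra.supported K K (mset n t) :=
        AddMonoidAlgebra.supported_mono (bset_subset I t) hsupp
      rw [← homSub_eq] at h1
      exact h1
    · have : f = ∑ d ∈ f.support, monomial d (coeff d f) :=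
        (support_sum_monomial_coeff f).symm
      rw [this]
      apply Ideal.sum_mem
      intro d hd
      have : (monomial d (coeff d f)) = C (coeff d f) * monomial d (1:K) := by
        rw [C_mul_monomial, mul_one]
      rw [this]
      exact I.mul_mem_left _ (hsupp hd).2

lemma HF_eq {I : Ideal (MvPolynomial (Fin n) K)} (hI : IsMonomialIdeal I) (t : ℕ) :
    HF I (t : ℤ) = (dset I t).ncard := by
  have h1 : Module.finrank K (homogeneousSubmodule (Fin n) K t) = (mset n t).ncard := by
    rw [homSub_eq]
    exact finrank_supported _ (mset_finite t)
  have h2 : Module.finrank K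
      ((homogeneousSubmodule (Fin n) K t ⊓ Submodule.restrictScalars K I :
        Submodule K (MvPolynomial (Fin n) K))) = (bset I t).ncard := by
    rw [inter_eq hI]
    exact finrank_supported _ ((mset_finite t).subset (bset_subset I t))
  rw [HF, if_pos (by positivity), Int.toNat_natCast, h1, h2, dset_eq,
    Set.ncard_diff (bset_subset I t) ((mset_finite t).subset (bset_subset I t))]

lemma degree_eq_card (d : Fin n →₀ ℕ) : d.degree = Multiset.card (Finsupp.toMultiset d) := by
  rw [Finsupp.card_toMultiset]; rfl

noncomputable def msetEquiv (t : ℕ) : (mset n t) ≃ Sym (Fin n) t where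
  toFun d := ⟨Finsupp.toMultiset d.1, by rw [← degree_eq_card]; exact d.2⟩
  invFun m := ⟨Multiset.toFinsupp m.1, by
    rw [mset, Set.mem_setOf_eq, degree_eq_card, Multiset.toFinsupp_toMultiset]; exact m.2⟩
  left_inv d := Subtype.ext (Finsupp.toMultiset_toFinsupp d.1)
  right_inv m := Subtype.ext (Multiset.toFinsupp_toMultiset m.1)

lemma card_mset (t : ℕ) : (mset n t).ncard = (n + t - 1).choose t := by
  rw [← Nat.card_coe_set_eq, Nat.card_congr (msetEquiv t), Nat.card_eq_fintype_card,
    Sym.card_sym_eq_choose, Fintype.card_fin]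

lemma shift_mem {I : Ideal (MvPolynomial (Fin n) K)} (hSS : StronglyStable I)
    (hsat : IsSaturatedIdeal I) (hn : 0 < n) {t : ℕ} {d : Fin n →₀ ℕ}
    (hd : d ∈ dset I t) : d + Finsupp.single ⟨n-1, by omega⟩ 1 ∈ dset I (t+1) := by
  constructor
  · rw [degree_add', degree_single', hd.1]
  · intro hmem
    exact hd.2 (sat_step hSS hsat hn d hmem)

lemma HF_mono_step {I : Ideal (MvPolynomial (Fin n) K)} (hSS : StronglyStable I)
    (hsat : IsSaturatedIdeal I) (hn : 0 < n) (t : ℕ) :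
    HF I (t : ℤ) ≤ HF I ((t+1 : ℕ) : ℤ) := by
  rw [HF_eq hSS.1 t, HF_eq hSS.1 (t+1)]
  set last : Fin n := ⟨n-1, by omega⟩
  calc (dset I t).ncard = ((· + Finsupp.single last 1) '' dset I t).ncard :=
        (Set.ncard_image_of_injective _ (add_left_injective _)).symm
    _ ≤ (dset I (t+1)).ncard := by
        apply Set.ncard_le_ncard _ (dset_finite I (t+1))
        rintro _ ⟨d, hd, rfl⟩
        exact shift_mem hSS hsat hn hd

lemma HF_mono {I : Ideal (MvPolynomial (Fin n) K)} (hSS : StronglyStable I)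
    (hsat : IsSaturatedIdeal I) (hn : 0 < n) {a b : ℕ} (hab : a ≤ b) :
    HF I (a : ℤ) ≤ HF I (b : ℤ) := by
  induction b, hab using Nat.le_induction with
  | base => exact le_refl _
  | succ b _ ih => exact le_trans ih (HF_mono_step hSS hsat hn b)

lemma HF_strict_step {I : Ideal (MvPolynomial (Fin n) K)} (hSS : StronglyStable I)
    (hsat : IsSaturatedIdeal I) (hn : 0 < n) {s : ℕ} {g : Fin n →₀ ℕ}
    (hg : g ∈ dset I (s+1)) (hglast : g ⟨n-1, by omega⟩ = 0) :
    HF I (s : ℤ) + 1 ≤ HF I ((s+1 : ℕ) : ℤ) := by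
  rw [HF_eq hSS.1 s, HF_eq hSS.1 (s+1)]
  set last : Fin n := ⟨n-1, by omega⟩
  have hins : insert g ((· + Finsupp.single last 1) '' dset I s) ⊆ dset I (s+1) := by
    rintro x hx
    rcases Set.mem_insert_iff.mp hx with rfl | ⟨d, hd, rfl⟩
    · exact hg
    · exact shift_mem hSS hsat hn hd
  have hnotmem : g ∉ (· + Finsupp.single last 1) '' dset I s := by
    intro hmem
    obtain ⟨d, _, hgd⟩ := hmem
    rw [← hgd] at hglast
    simp [Finsupp.add_apply, Finsupp.single_apply] at hglast
  have himgfin : ((· + Finsupp.single last 1) '' dset I s).Finite :=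
    ((dset_finite I s).image _)
  calc (dset I s).ncard + 1
      = ((· + Finsupp.single last 1) '' dset I s).ncard + 1 := by
        rw [Set.ncard_image_of_injective _ (add_left_injective _)]
    _ = (insert g ((· + Finsupp.single last 1) '' dset I s)).ncard := by
        rw [Set.ncard_insert_of_notMem hnotmem himgfin]
    _ ≤ (dset I (s+1)).ncard := Set.ncard_le_ncard hins (dset_finite I (s+1))

lemma initDeg_le {I : Ideal (MvPolynomial (Fin n) K)} {k : Fin n →₀ ℕ}
    (h : (monomial k (1:K)) ∈ I) : initDeg I ≤ expDeg k :=
  Nat.sInf_le ⟨monomial k 1, h, by simp [monomial_eq_zero],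
    isHomogeneous_monomial _ (expDeg_eq_degree k ▸ rfl)⟩

lemma initDeg_pos {I : Ideal (MvPolynomial (Fin n) K)} (hI : IsMonomialIdeal I)
    (h1 : (1 : MvPolynomial (Fin n) K) ∉ I) {k : Fin n →₀ ℕ}
    (hk : (monomial k (1:K)) ∈ I) : 0 < initDeg I := by
  rw [Nat.pos_iff_ne_zero]
  intro h0
  have hne : {t : ℕ | ∃ f ∈ I, f ≠ 0 ∧ MvPolynomial.IsHomogeneous f t}.Nonempty :=
    ⟨expDeg k, monomial k 1, hk, by simp [monomial_eq_zero],
      isHomogeneous_monomial _ (expDeg_eq_degree k ▸ rfl)⟩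
  have h0mem : 0 ∈ {t : ℕ | ∃ f ∈ I, f ≠ 0 ∧ MvPolynomial.IsHomogeneous f t} := by
    rcases (Nat.sInf_eq_zero.mp h0) with h | h
    · exact h
    · rw [h] at hne; exact absurd hne (by simp)
  obtain ⟨f, hfI, hf0, hfhom⟩ := h0mem
  obtain ⟨d, hd⟩ := (support_nonempty.mpr hf0)
  have hd0 : d = 0 := by
    have := hfhom (show coeff d f ≠ 0 by simpa [mem_support_iff] using hd)
    have hdeg : d.degree = 0 := by simpa [Finsupp.degree_eq_weight_one, Pi.one_def] using this
    exact (Finsupp.degree_eq_zero_iff d).mp hdeg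
  have := hI f hfI d hd
  rw [hd0] at this
  rw [show (monomial (0 : Fin n →₀ ℕ) (1:K)) = 1 by simp [monomial_zero']] at this
  exact h1 this

lemma dset_eq_mset_of_lt {I : Ideal (MvPolynomial (Fin n) K)} {t : ℕ}
    (ht : t < initDeg I) : dset I t = mset n t := by
  ext d
  simp only [dset, mset, Set.mem_setOf_eq, and_iff_left_iff_imp]
  intro hdeg hmem
  have := initDeg_le hmem
  rw [expDeg_eq_degree, hdeg] at this
  omega

end Aux

theorem reg_bound_dim_one {K : Type*} [Field K] {n : ℕ}
    (I : Ideal (MvPolynomial (Fin n) K)) (hSS : StronglyStable I)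
    (hsat : IsSaturatedIdeal I)
    (hdim : ringKrullDim (MvPolynomial (Fin n) K ⧸ I) = 1)
    (degRI : ℕ) (hdeg : ∃ N : ℤ, ∀ t : ℤ, N ≤ t → HF I t = degRI) :
    ∀ k : Fin n →₀ ℕ, IsMinGen I k →
      (expDeg k : ℤ) ≤ (degRI : ℤ) -
        Nat.choose (initDeg I - 1 + (n - 1)) (initDeg I - 1) + initDeg I := by
  intro k hk
  classical
  have hI := hSS.1
  have h1 : (1 : MvPolynomial (Fin n) K) ∉ I := by
    intro h
    have htop : I = ⊤ := (Ideal.eq_top_iff_one I).mpr h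
    have : Subsingleton (MvPolynomial (Fin n) K ⧸ I) :=
      Ideal.Quotient.subsingleton_iff.mpr htop
    rw [ringKrullDim_eq_bot_of_subsingleton] at hdim
    exact absurd hdim (by simp)
  have hkI := hk.1
  have hkne : k ≠ 0 := by
    rintro rfl
    rw [show (monomial (0 : Fin n →₀ ℕ) (1:K)) = 1 by simp [monomial_zero']] at hkI
    exact h1 hkI
  obtain ⟨i0, hi0⟩ : ∃ i, k i ≠ 0 := by
    by_contra hno; push_neg at hno; exact hkne (Finsupp.ext fun i => hno i)
  have hn : 0 < n := i0.pos
  set α := initDeg I with hα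
  set d := expDeg k with hd
  have hαd : α ≤ d := initDeg_le hkI
  have hαpos : 0 < α := initDeg_pos hI h1 hkI
  have hbase : HF I ((α-1 : ℕ) : ℤ) = (mset n (α-1)).ncard := by
    rw [HF_eq hI, dset_eq_mset_of_lt (by omega)]
  set last : Fin n := ⟨n-1, by omega⟩ with hlastdef
  have hklast : k last = 0 := minGen_last_eq_zero hSS hsat hn hk
  have he : expDeg (k - Finsupp.single i0 1) = d - 1 := by
    have hle : Finsupp.single i0 1 ≤ k := by rw [Finsupp.single_le_iff]; omega
    have h2 := congrArg Finsupp.degree (tsub_add_cancel_of_le hle)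
    rw [degree_add', degree_single'] at h2
    simp only [expDeg_eq_degree] at hd ⊢
    omega
  have hstrict : ∀ s : ℕ, α ≤ s + 1 → s + 1 ≤ d - 1 →
      HF I (s : ℤ) + 1 ≤ HF I ((s+1 : ℕ) : ℤ) := by
    intro s h1s h2s
    have hene : (monomial (k - Finsupp.single i0 1) (1:K)) ∉ I := hk.2 i0 hi0
    obtain ⟨f, hfle, hfdeg⟩ :=
      exists_le_expDeg (e := k - Finsupp.single i0 1) (m := s+1) (by omega)
    refine HF_strict_step hSS hsat hn (g := f) ⟨?_, ?_⟩ ?_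
    · rw [← expDeg_eq_degree, hfdeg]
    · intro hmem; exact hene (mono_mem_of_le hfle hmem)
    · have hle2 : f ≤ k := le_trans hfle tsub_le_self
      have hf1 : f last ≤ k last := Finsupp.le_def.mp hle2 last
      show f last = 0
      omega
  have key : ∀ j : ℕ, j ≤ d - α → (mset n (α-1)).ncard + j ≤ HF I ((α - 1 + j : ℕ) : ℤ) := by
    intro j
    induction j with
    | zero => intro _; simpa using hbase.ge
    | succ j ih =>
      intro hj
      have hj1 := ih (by omega)
      have hj2 := hstrict (α - 1 + j) (by omega) (by omega)
      have heq2 : α - 1 + (j+1) = (α - 1 + j) + 1 := by omega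
      rw [heq2]
      omega
  have hdm1 : α - 1 + (d - α) = d - 1 := by omega
  have hkey := key (d - α) (le_refl _)
  rw [hdm1] at hkey
  obtain ⟨N, hN⟩ := hdeg
  set T : ℕ := max (d-1) N.toNat with hT
  have hHT : HF I (T : ℤ) = degRI := by
    apply hN
    calc N ≤ (N.toNat : ℤ) := Int.self_le_toNat N
      _ ≤ (T : ℤ) := by exact_mod_cast le_max_right _ _
  have hup : HF I ((d-1 : ℕ) : ℤ) ≤ degRI := by
    rw [← hHT]
    exact HF_mono hSS hsat hn (le_max_left _ _)
  have hC : (mset n (α-1)).ncard + (d - α) ≤ degRI := le_trans hkey hup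
  have hCval : (mset n (α-1)).ncard = (α - 1 + (n-1)).choose (α-1) := by
    rw [card_mset]
    congr 1
    omega
  rw [hCval] at hC
  omega

end Paper
end
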